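/- Let U be a finite type and let L be an ℝ-linear subspace of the space of functions U → ℝ. If g ∈ thr L and φ ∈ L, then the function sending u to sign(φ(u)) when φ(u) ≠ 0 and to g(u) when φ(u) = 0 also belongs to thr L. (Every strongly thresholded linear class is closed under the operation g ⋊ sign(φ) of overriding g by the sign pattern of a member φ of L wherever φ is nonzero.) -/
import Mathlib


/-- The strongly thresholded class of a linear subspace `L` of real functions on `U`:
the sign functions of members of `L` that vanish nowhere. -/
def thr {U : Type} [Fintype U] (L : Submodule ℝ (U → ℝ)) : Set (U → SignType) :=
  {g | ∃ φ ∈ L, (∀ u, φ u ≠ 0) ∧ ∀ u, g u = SignType.sign (φ u)}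

/-- A strongly thresholded linear class is closed under overriding a member `g` by the
sign pattern of any `φ ∈ L` wherever `φ` is nonzero. -/
theorem thr_closed_under_override {U : Type} [Fintype U] (L : Submodule ℝ (U → ℝ))
    (g : U → SignType) (hg : g ∈ thr L) (φ : U → ℝ) (hφ : φ ∈ L) :
    (fun u => if φ u = 0 then g u else SignType.sign (φ u)) ∈ thr L := by
  obtain ⟨ψ, hψL, hψ0, hψs⟩ := hg
  classical
  set S : Finset U := Finset.univ.filter (fun u => φ u ≠ 0) with hS
  set T : Finset ℝ := insert 1 (S.image fun u => |φ u| / (|ψ u| + 1)) with hT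
  have hTne : T.Nonempty := ⟨1, by simp [hT]⟩
  set ε := T.min' hTne with hε
  have hεpos : 0 < ε := by
    rw [hε, Finset.lt_min'_iff]
    intro a ha
    rw [hT, Finset.mem_insert] at ha
    rcases ha with rfl | ha
    · exact one_pos
    · obtain ⟨u, hu, rfl⟩ := Finset.mem_image.mp ha
      rw [hS, Finset.mem_filter] at hu
      exact div_pos (abs_pos.mpr hu.2) (by positivity)
  have key : ∀ u, φ u ≠ 0 → |ε * ψ u| < |φ u| := by
    intro u hu
    have hmem : |φ u| / (|ψ u| + 1) ∈ T := by
      rw [hT, Finset.mem_insert]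
      right
      exact Finset.mem_image.mpr ⟨u, by simp [hS, hu], rfl⟩
    have hle : ε ≤ |φ u| / (|ψ u| + 1) := Finset.min'_le _ _ hmem
    have h1 : |ε * ψ u| = ε * |ψ u| := by
      rw [abs_mul, abs_of_pos hεpos]
    rw [h1]
    have h2 : ε * |ψ u| ≤ |φ u| / (|ψ u| + 1) * |ψ u| :=
      mul_le_mul_of_nonneg_right hle (abs_nonneg _)
    have h3 : |φ u| / (|ψ u| + 1) * |ψ u| < |φ u| := by
      rw [div_mul_eq_mul_div, div_lt_iff₀ (by positivity)]
      have hφpos : 0 < |φ u| := abs_pos.mpr hu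
      nlinarith [abs_nonneg (ψ u)]
    linarith
  refine ⟨φ + ε • ψ, L.add_mem hφ (L.smul_mem ε hψL), ?_, ?_⟩
  · intro u
    simp only [Pi.add_apply, Pi.smul_apply, smul_eq_mul]
    by_cases h : φ u = 0
    · rw [h, zero_add]
      exact mul_ne_zero (ne_of_gt hεpos) (hψ0 u)
    · have := key u h
      intro hc
      rw [abs_lt] at this
      rcases abs_cases (φ u) with ⟨he, _⟩ | ⟨he, _⟩ <;> rw [he] at this <;>
        · obtain ⟨h1, h2⟩ := this; linarith
  · intro u
    simp only [Pi.add_apply, Pi.smul_apply, smul_eq_mul]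
    by_cases h : φ u = 0
    · rw [if_pos h, h, zero_add, hψs u, sign_mul, sign_pos hεpos, one_mul]
    · rw [if_neg h]
      have hk := key u h
      rw [abs_lt] at hk
      rcases lt_trichotomy (φ u) 0 with hlt | heq | hgt
      · rw [abs_of_neg hlt] at hk
        rw [sign_neg hlt, sign_neg (by linarith [hk.2])]
      · exact absurd heq h
      · rw [abs_of_pos hgt] at hk
        rw [sign_pos hgt, sign_pos (by linarith [hk.1])]
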